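/- Let H be a topologically finitely generated powerful pro-p group. Then for every i ≥ 0, the (i+1)-st term of the lower p-series satisfies P_{i+1}(H) = { x^{p^i} : x ∈ H }. -/

import Mathlib

/-- The subgroup of `G` topologically generated by the `p`-th powers of elements of a subgroup
`K` together with commutators `[K, G]`: the closure of `K^p [K, G]`. -/
def pPowComm (p : ℕ) {G : Type*} [Group G] [TopologicalSpace G] [IsTopologicalGroup G]
    (K : Subgroup G) : Subgroup G :=
  (Subgroup.closure ((fun x => x ^ p) '' (K : Set G)) ⊔ ⁅K, (⊤ : Subgroup G)⁆).topologicalClosure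

/-- The lower `p`-series of `G`, 0-indexed: `lowerPSeries p G i` is `P_{i+1}(G)` of the paper,
so `lowerPSeries p G 0 = P_1(G) = G` and `P_{i+1} = cl(P_i^p [P_i, G])`. -/
def lowerPSeries (p : ℕ) (G : Type*) [Group G] [TopologicalSpace G] [IsTopologicalGroup G] :
    ℕ → Subgroup G
  | 0 => ⊤
  | (i + 1) => pPowComm p (lowerPSeries p G i)

/-- `G` is a pro-`p` group: a compact, Hausdorff, totally disconnected topological group in which
every open normal subgroup has index a power of `p`. -/
def IsProP (p : ℕ) (G : Type*) [Group G] [TopologicalSpace G] [IsTopologicalGroup G] : Prop :=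
  CompactSpace G ∧ T2Space G ∧ TotallyDisconnectedSpace G ∧
    ∀ N : Subgroup G, N.Normal → IsOpen (N : Set G) → ∃ m : ℕ, Nat.card (G ⧸ N) = p ^ m

open scoped commutatorElement

/-- `G` is powerful: `p` odd and `G/cl(G^p)` abelian, or `p = 2` and `G/cl(G^4)` abelian;
equivalently every commutator lies in the closure of the subgroup generated by `p`-th
(resp. fourth) powers. -/
def IsPowerful (p : ℕ) (G : Type*) [Group G] [TopologicalSpace G] [IsTopologicalGroup G] : Prop :=
  (Odd p ∧ ∀ x y : G,
      ⁅x, y⁆ ∈ (Subgroup.closure ((fun g : G => g ^ p) '' Set.univ)).topologicalClosure) ∨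
  (p = 2 ∧ ∀ x y : G,
      ⁅x, y⁆ ∈ (Subgroup.closure ((fun g : G => g ^ 4) '' Set.univ)).topologicalClosure)

/-- `G` is topologically finitely generated. -/
def TopFG (G : Type*) [Group G] [TopologicalSpace G] [IsTopologicalGroup G] : Prop :=
  ∃ S : Finset G, (Subgroup.closure (S : Set G)).topologicalClosure = ⊤


open Subgroup
open scoped Pointwise

universe u

section Identities

variable {G : Type*} [Group G]

lemma comm_succ_pow (x g : G) (n : ℕ) :
    ⁅x ^ (n + 1), g⁆ = x * ⁅x ^ n, g⁆ * x⁻¹ * ⁅x, g⁆ := by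
  simp only [commutatorElement_def, pow_succ']
  group

lemma choose_two_succ (n : ℕ) : (n + 1).choose 2 = n.choose 2 + n := by
  rw [Nat.choose_succ_succ, Nat.choose_one_right, Nat.add_comm]

lemma comm_pow_formula (x g z : G) (hzdef : z = ⁅x, ⁅x, g⁆⁆) (hz : ∀ a : G, Commute z a) :
    ∀ n : ℕ, ⁅x ^ n, g⁆ = z ^ n.choose 2 * ⁅x, g⁆ ^ n := by
  intro n
  induction n with
  | zero => simp
  | succ n ih =>
    have hconj : x * ⁅x, g⁆ * x⁻¹ = z * ⁅x, g⁆ := by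
      rw [hzdef]; group
    have h2 : x * z ^ n.choose 2 * x⁻¹ = z ^ n.choose 2 := by
      have h := ((hz x).pow_left (n.choose 2)).eq
      rw [← h, mul_inv_cancel_right]
    have h3 : x * ⁅x, g⁆ ^ n * x⁻¹ = (z * ⁅x, g⁆) ^ n := by
      rw [← hconj, conj_pow]
    calc ⁅x ^ (n + 1), g⁆ = x * ⁅x ^ n, g⁆ * x⁻¹ * ⁅x, g⁆ := comm_succ_pow x g n
      _ = (x * z ^ n.choose 2 * x⁻¹) * (x * ⁅x, g⁆ ^ n * x⁻¹) * ⁅x, g⁆ := by rw [ih]; group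
      _ = z ^ n.choose 2 * ((z * ⁅x, g⁆) ^ n) * ⁅x, g⁆ := by rw [h2, h3]
      _ = z ^ n.choose 2 * (z ^ n * ⁅x, g⁆ ^ n) * ⁅x, g⁆ := by rw [(hz ⁅x, g⁆).mul_pow]
      _ = (z ^ n.choose 2 * z ^ n) * (⁅x, g⁆ ^ n * ⁅x, g⁆) := by group
      _ = z ^ (n + 1).choose 2 * ⁅x, g⁆ ^ (n + 1) := by
          rw [← pow_add, ← pow_succ, choose_two_succ]

lemma mul_pow_formula (a b w : G) (hw : ∀ x : G, Commute w x) (hrel : b * a = a * b * w) :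
    ∀ n : ℕ, (a * b) ^ n = a ^ n * b ^ n * w ^ n.choose 2 := by
  have key : ∀ n : ℕ, b ^ n * a = a * b ^ n * w ^ n := by
    intro n
    induction n with
    | zero => simp
    | succ n ih =>
      have hwb : w ^ n * b = b * w ^ n := (((hw b).pow_left n)).eq
      calc b ^ (n + 1) * a = b ^ n * (b * a) := by rw [pow_succ]; group
        _ = b ^ n * a * b * w := by rw [hrel]; group
        _ = a * b ^ n * w ^ n * b * w := by rw [ih]
        _ = a * b ^ n * (w ^ n * b) * w := by group
        _ = a * b ^ n * (b * w ^ n) * w := by rw [hwb]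
        _ = a * b ^ (n + 1) * w ^ (n + 1) := by rw [pow_succ, pow_succ]; group
  intro n
  induction n with
  | zero => simp
  | succ n ih =>
    have hmove : ∀ m : ℕ, ∀ x : G, w ^ m * x = x * w ^ m := fun m x => ((hw x).pow_left m).eq
    calc (a * b) ^ (n + 1) = (a * b) ^ n * (a * b) := pow_succ _ n
      _ = a ^ n * b ^ n * w ^ n.choose 2 * (a * b) := by rw [ih]
      _ = a ^ n * b ^ n * (w ^ n.choose 2 * a) * b := by group
      _ = a ^ n * b ^ n * (a * w ^ n.choose 2) * b := by rw [hmove]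
      _ = a ^ n * (b ^ n * a) * (w ^ n.choose 2 * b) := by group
      _ = a ^ n * (a * b ^ n * w ^ n) * (b * w ^ n.choose 2) := by rw [key, hmove]
      _ = a ^ (n + 1) * b ^ n * (w ^ n * b) * w ^ n.choose 2 := by rw [pow_succ]; group
      _ = a ^ (n + 1) * b ^ n * (b * w ^ n) * w ^ n.choose 2 := by rw [hmove]
      _ = a ^ (n + 1) * b ^ (n + 1) * (w ^ n * w ^ n.choose 2) := by rw [pow_succ]; group
      _ = a ^ (n + 1) * b ^ (n + 1) * w ^ (n + 1).choose 2 := by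
          rw [← pow_add, choose_two_succ n, Nat.add_comm n (n.choose 2)]

lemma comm_mul_central_right (a u b : G) (hu : ∀ x : G, Commute u x) :
    ⁅a * u, b⁆ = ⁅a, b⁆ := by
  have h1 : u * b * u⁻¹ = b := by rw [(hu b).eq, mul_inv_cancel_right]
  calc ⁅a * u, b⁆ = a * (u * b * u⁻¹) * a⁻¹ * b⁻¹ := by
        simp only [commutatorElement_def]; group
    _ = ⁅a, b⁆ := by rw [h1]; simp only [commutatorElement_def]

lemma comm_mul_central_left (a b u : G) (hu : ∀ x : G, Commute u x) :
    ⁅a, b * u⁆ = ⁅a, b⁆ := by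
  have h1 : u * a⁻¹ * u⁻¹ = a⁻¹ := by rw [(hu a⁻¹).eq, mul_inv_cancel_right]
  calc ⁅a, b * u⁆ = a * b * (u * a⁻¹ * u⁻¹) * b⁻¹ := by
        simp only [commutatorElement_def]; group
    _ = ⁅a, b⁆ := by rw [h1]; simp only [commutatorElement_def]

lemma commutator_absorb_central (h₁ u₁ h₂ u₂ : G) (hu₁ : ∀ x : G, Commute u₁ x)
    (hu₂ : ∀ x : G, Commute u₂ x) : ⁅h₁ * u₁, h₂ * u₂⁆ = ⁅h₁, h₂⁆ := by
  rw [comm_mul_central_right _ _ _ hu₁, comm_mul_central_left _ _ _ hu₂]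

end Identities
section PPAux

variable {G : Type*} [Group G] {H' : Type*} [Group H']

/-- Subgroup generated by `n`-th powers of elements of `K`. -/
def PP (n : ℕ) (K : Subgroup G) : Subgroup G :=
  Subgroup.closure ((fun x => x ^ n) '' (K : Set G))

lemma pow_mem_PP {n : ℕ} {K : Subgroup G} {x : G} (hx : x ∈ K) : x ^ n ∈ PP n K :=
  Subgroup.subset_closure ⟨x, hx, rfl⟩

lemma PP_le {n : ℕ} {K : Subgroup G} : PP n K ≤ K := by
  rw [PP, Subgroup.closure_le]
  rintro _ ⟨x, hx, rfl⟩
  exact K.pow_mem hx n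

lemma PP_mono {n : ℕ} {K L : Subgroup G} (h : K ≤ L) : PP n K ≤ PP n L :=
  Subgroup.closure_mono (Set.image_mono h)

lemma map_PP (f : G →* H') (n : ℕ) (K : Subgroup G) :
    (PP n K).map f = PP n (K.map f) := by
  rw [PP, PP, MonoidHom.map_closure]
  congr 1
  rw [Subgroup.coe_map, Set.image_image, Set.image_image]
  apply Set.image_congr
  intro a _
  exact map_pow f a n

lemma PP_four_le_PP_two (K : Subgroup G) : PP 4 K ≤ PP 2 K := by
  rw [PP, Subgroup.closure_le]
  rintro _ ⟨x, hx, rfl⟩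
  show x ^ 4 ∈ PP 2 K
  have h4 : x ^ 4 = (x ^ 2) ^ 2 := by rw [← pow_mul]
  rw [h4]
  exact pow_mem_PP (K.pow_mem hx 2)

lemma normal_of_comm_le {N : Subgroup G} (h : ⁅N, (⊤ : Subgroup G)⁆ ≤ N) : N.Normal := by
  constructor
  intro n hn g
  have h1 : ⁅n, g⁆ ∈ N := h (Subgroup.commutator_mem_commutator hn (Subgroup.mem_top g))
  have h2 : g * n * g⁻¹ = (⁅n, g⁆)⁻¹ * n := by
    simp only [commutatorElement_def]; group
  rw [h2]
  exact N.mul_mem (N.inv_mem h1) hn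

lemma map_eq_self_of_normal {N : Subgroup G} (hN : N.Normal) (g : G) :
    N.map (MulAut.conj g).toMonoidHom = N := by
  ext x
  constructor
  · rintro ⟨y, hy, rfl⟩
    exact hN.conj_mem y hy g
  · intro hx
    exact ⟨g⁻¹ * x * g, by simpa using hN.conj_mem x hx g⁻¹, by simp [MulAut.conj]; group⟩

lemma PP_normal {n : ℕ} {K : Subgroup G} (hK : K.Normal) : (PP n K).Normal := by
  constructor
  intro x hx g
  have h1 : (MulAut.conj g).toMonoidHom x ∈ (PP n K).map (MulAut.conj g).toMonoidHom :=
    Subgroup.mem_map_of_mem _ hx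
  rw [map_PP, map_eq_self_of_normal hK] at h1
  simpa [MulAut.conj] using h1

lemma normal_of_central {K : Subgroup G} (hK : ∀ k ∈ K, ∀ x : G, Commute k x) : K.Normal := by
  constructor
  intro n hn g
  have : g * n * g⁻¹ = n := by rw [← (hK n hn g).eq, mul_inv_cancel_right]
  rw [this]; exact hn

lemma zpowers_central {w : G} (hw : ∀ x : G, Commute w x) :
    ∀ z ∈ Subgroup.zpowers w, ∀ x : G, Commute z x := by
  intro z hz x
  obtain ⟨j, rfl⟩ := Subgroup.mem_zpowers_iff.mp hz
  exact (hw x).zpow_left j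

lemma zpowers_pow_eq_one {q : ℕ} {w : G} (hw : w ^ q = 1) {z : G}
    (hz : z ∈ Subgroup.zpowers w) : z ^ q = 1 := by
  obtain ⟨j, rfl⟩ := Subgroup.mem_zpowers_iff.mp hz
  rw [← zpow_natCast (w ^ j) q, ← zpow_mul, mul_comm, zpow_mul, zpow_natCast, hw, one_zpow]

end PPAux
section PGroupAux

variable {p : ℕ} [hp : Fact p.Prime]

lemma card_quotient_lt {G : Type u} [Group G] [Finite G] {T : Subgroup G} [T.Normal]
    (hT : T ≠ ⊥) : Nat.card (G ⧸ T) < Nat.card G := by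
  have h := Subgroup.card_eq_card_quotient_mul_card_subgroup T
  have h2 : 1 < Nat.card ↥T := (Subgroup.one_lt_card_iff_ne_bot T).mpr hT
  have h3 : 0 < Nat.card (G ⧸ T) := Nat.card_pos
  calc Nat.card (G ⧸ T) < Nat.card (G ⧸ T) * Nat.card ↥T := by
        exact (lt_mul_iff_one_lt_right h3).mpr h2
    _ = Nat.card G := h.symm

lemma card_subgroup_lt {G : Type u} [Group G] [Finite G] {K : Subgroup G} (h : K ≠ ⊤) :
    Nat.card ↥K < Nat.card G := by
  refine lt_of_le_of_ne (Nat.le_of_dvd Nat.card_pos (Subgroup.card_subgroup_dvd_card K)) ?_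
  intro hEq
  exact h (Subgroup.eq_top_of_card_eq K hEq)

/-- In a finite `p`-group, every nontrivial normal subgroup contains a central element
of order `p`. -/
lemma exists_order_p_central {G : Type u} [Group G] [Finite G] (hG : IsPGroup p G)
    (N : Subgroup G) [hN : N.Normal] (hbot : N ≠ ⊥) :
    ∃ w : G, w ∈ N ∧ (∀ x : G, Commute w x) ∧ w ≠ 1 ∧ w ^ p = 1 := by
  classical
  letI : MulAction G ↥N := MulAction.compHom _ (MulAut.conjNormal : G →* MulAut ↥N)
  have hsmul : ∀ (g : G) (a : ↥N), g • a = MulAut.conjNormal g a := fun g a => rfl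
  -- the central fixed point
  have key := hG.card_modEq_card_fixedPoints (↥N)
  have hpN : p ∣ Nat.card ↥N := by
    obtain ⟨k, hk⟩ := IsPGroup.iff_card.mp (hG.to_subgroup N)
    have h1 : 1 < Nat.card ↥N := (Subgroup.one_lt_card_iff_ne_bot N).mpr hbot
    rcases Nat.eq_zero_or_pos k with hk0 | hkpos
    · rw [hk0, pow_zero] at hk; omega
    · rw [hk]; exact dvd_pow_self p (Nat.pos_iff_ne_zero.mp hkpos)
  have h1fix : (1 : ↥N) ∈ MulAction.fixedPoints G ↥N := by
    intro g
    rw [hsmul, map_one]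
  have hfixdvd : p ∣ Nat.card ↥(MulAction.fixedPoints G ↥N) := by
    have := (Nat.modEq_zero_iff_dvd).mpr hpN
    exact (Nat.modEq_zero_iff_dvd).mp ((key.symm.trans this))
  have hfixpos : 0 < Nat.card ↥(MulAction.fixedPoints G ↥N) := by
    have : Nonempty ↥(MulAction.fixedPoints G ↥N) := ⟨⟨1, h1fix⟩⟩
    exact Nat.card_pos
  have hnontriv : Nontrivial ↥(MulAction.fixedPoints G ↥N) := by
    rw [← Finite.one_lt_card_iff_nontrivial]
    have h4 := Nat.le_of_dvd hfixpos hfixdvd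
    have := hp.out.two_le
    omega
  obtain ⟨b, hb⟩ := exists_ne (⟨⟨1, N.one_mem⟩, h1fix⟩ : ↥(MulAction.fixedPoints G ↥N))
  set w₀ : G := ((b : ↥N) : G) with hw₀
  have hw₀N : w₀ ∈ N := (b : ↥N).2
  have hw₀c : ∀ x : G, Commute w₀ x := by
    intro x
    have hfix := b.2 x
    rw [hsmul] at hfix
    have : x * w₀ * x⁻¹ = w₀ := by
      have := congrArg (fun a : ↥N => (a : G)) hfix
      simpa [MulAut.conjNormal_apply] using this
    have h2 : x * w₀ = w₀ * x := by
      have := congrArg (fun a => a * x) this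
      simpa [mul_assoc] using this
    exact ((h2 : Commute x w₀)).symm
  have hw₀1 : w₀ ≠ 1 := by
    intro hcon
    apply hb
    apply Subtype.ext
    apply Subtype.ext
    exact hcon
  -- pass to a power of order p
  obtain ⟨k, hk⟩ := hG w₀
  have hord : orderOf w₀ ∣ p ^ k := orderOf_dvd_of_pow_eq_one hk
  obtain ⟨j, hjk, hj⟩ := (Nat.dvd_prime_pow hp.out).mp hord
  have hj1 : 1 ≤ j := by
    by_contra hcon
    push_neg at hcon
    interval_cases j
    rw [pow_zero] at hj
    exact hw₀1 (orderOf_eq_one_iff.mp hj)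
  refine ⟨w₀ ^ p ^ (j - 1), N.pow_mem hw₀N _, fun x => (hw₀c x).pow_left _, ?_, ?_⟩
  · intro hcon
    have hdvd : orderOf w₀ ∣ p ^ (j - 1) := orderOf_dvd_of_pow_eq_one hcon
    rw [hj] at hdvd
    have := (Nat.pow_dvd_pow_iff_le_right hp.out.one_lt).mp hdvd
    omega
  · rw [← pow_mul, ← pow_succ]
    have hsucc : j - 1 + 1 = j := by omega
    rw [hsucc, ← hj]
    exact pow_orderOf_eq_one w₀

end PGroupAux
section TopPP

variable {p : ℕ} [hp : Fact p.Prime]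

lemma map_mk'_top {G : Type u} [Group G] (W : Subgroup G) [W.Normal] :
    Subgroup.map (QuotientGroup.mk' W) ⊤ = ⊤ :=
  Subgroup.map_top_of_surjective _ (QuotientGroup.mk'_surjective W)

/-- A finite `p`-group generated by `p`-th powers is trivial. -/
lemma subsingleton_of_PP_eq_top :
    ∀ (n : ℕ) (G : Type u) [Group G] [Finite G], Nat.card G ≤ n → IsPGroup p G →
      PP p (⊤ : Subgroup G) = ⊤ → Subsingleton G := by
  intro n
  induction n using Nat.strong_induction_on with
  | _ n IH =>
    intro G _ _ hle hG hPP
    rcases subsingleton_or_nontrivial G with hss | hnt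
    · exact hss
    exfalso
    -- pick a nontrivial central element
    haveI := hG.center_nontrivial
    obtain ⟨wc, hwc1⟩ := exists_ne (1 : ↥(Subgroup.center G))
    set w : G := (wc : G) with hwdef
    have hwcen : w ∈ Subgroup.center G := wc.2
    have hw1 : w ≠ 1 := fun hcon => hwc1 (Subtype.ext hcon)
    have hwcomm : ∀ x : G, Commute w x := fun x => ((Subgroup.mem_center_iff.mp hwcen) x).symm
    set W := Subgroup.zpowers w with hWdef
    haveI : W.Normal := normal_of_central (zpowers_central hwcomm)
    have hWbot : W ≠ ⊥ := by
      intro hcon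
      exact hw1 (Subgroup.mem_bot.mp (hcon ▸ Subgroup.mem_zpowers w))
    -- quotient is trivial by induction
    have hcardQ : Nat.card (G ⧸ W) < n := lt_of_lt_of_le (card_quotient_lt hWbot) hle
    have hPPQ : PP p (⊤ : Subgroup (G ⧸ W)) = ⊤ := by
      have h1 : Subgroup.map (QuotientGroup.mk' W) (PP p ⊤) = ⊤ := by
        rw [hPP, map_mk'_top]
      rw [map_PP, map_mk'_top] at h1
      exact h1
    have hsub : Subsingleton (G ⧸ W) :=
      IH _ hcardQ (G ⧸ W) le_rfl (hG.to_quotient W) hPPQ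
    -- so G is cyclic generated by w
    have hWtop : W = ⊤ := by
      rw [eq_top_iff]
      intro g _
      exact (QuotientGroup.eq_one_iff g).mp (Subsingleton.elim _ _)
    -- and PP p ⊤ ≤ zpowers (w ^ p)
    have hPPle : PP p (⊤ : Subgroup G) ≤ Subgroup.zpowers (w ^ p) := by
      rw [PP, Subgroup.closure_le]
      rintro _ ⟨x, -, rfl⟩
      have hx : x ∈ W := hWtop ▸ Subgroup.mem_top x
      obtain ⟨j, rfl⟩ := Subgroup.mem_zpowers_iff.mp hx
      show (w ^ j) ^ p ∈ Subgroup.zpowers (w ^ p)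
      rw [Subgroup.mem_zpowers_iff]
      refine ⟨j, ?_⟩
      rw [← zpow_natCast (w ^ j) p, ← zpow_mul, ← zpow_natCast w p, ← zpow_mul, mul_comm]
    have hwPP : w ∈ PP p (⊤ : Subgroup G) := by rw [hPP]; exact Subgroup.mem_top w
    have hwmem : w ∈ Subgroup.zpowers (w ^ p) := hPPle hwPP
    obtain ⟨j, hj⟩ := Subgroup.mem_zpowers_iff.mp hwmem
    -- derive p ∣ 1
    have hrel : w ^ ((p : ℤ) * j - 1) = 1 := by
      rw [zpow_sub, zpow_one, zpow_mul, zpow_natCast]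
      rw [hj]
      exact mul_inv_cancel w
    have hdvd1 : (↑(orderOf w) : ℤ) ∣ (p : ℤ) * j - 1 := orderOf_dvd_iff_zpow_eq_one.mpr hrel
    obtain ⟨k, hk⟩ := hG w
    obtain ⟨t, htk, ht⟩ := (Nat.dvd_prime_pow hp.out).mp (orderOf_dvd_of_pow_eq_one hk)
    have ht1 : 1 ≤ t := by
      by_contra hcon
      push_neg at hcon
      interval_cases t
      rw [pow_zero] at ht
      exact hw1 (orderOf_eq_one_iff.mp ht)
    have hpord : (p : ℤ) ∣ (orderOf w : ℤ) := by
      rw [ht]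
      exact_mod_cast Int.natCast_dvd_natCast.mpr (dvd_pow_self p (by omega : t ≠ 0))
    have hpd : (p : ℤ) ∣ 1 := by
      have h1 : (p : ℤ) ∣ (p : ℤ) * j - 1 := hpord.trans hdvd1
      have h2 : (p : ℤ) ∣ (p : ℤ) * j := dvd_mul_right _ _
      have := dvd_sub h2 h1
      simpa using this
    have := Int.le_of_dvd one_pos hpd
    have := hp.out.two_le
    omega

/-- Frattini-type argument: in a finite `p`-group, `H ⊔ [G,G] = G` implies `H = G`. -/
lemma eq_top_of_sup_commutator :
    ∀ (n : ℕ) (G : Type u) [Group G] [Finite G], Nat.card G ≤ n → IsPGroup p G →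
      ∀ Hs : Subgroup G, Hs ⊔ ⁅(⊤ : Subgroup G), ⊤⁆ = ⊤ → Hs = ⊤ := by
  intro n
  induction n using Nat.strong_induction_on with
  | _ n IH =>
    intro G _ _ hle hG Hs hsup
    by_cases hD : ⁅(⊤ : Subgroup G), (⊤ : Subgroup G)⁆ = ⊥
    · rw [hD, sup_bot_eq] at hsup
      exact hsup
    · haveI : Subgroup.Normal ⁅(⊤ : Subgroup G), (⊤ : Subgroup G)⁆ := Subgroup.commutator_normal ⊤ ⊤
      obtain ⟨w, hwD, hwcomm, hw1, hwp⟩ := exists_order_p_central hG ⁅(⊤ : Subgroup G), (⊤ : Subgroup G)⁆ hD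
      set W := Subgroup.zpowers w with hWdef
      haveI : W.Normal := normal_of_central (zpowers_central hwcomm)
      have hWbot : W ≠ ⊥ := fun hcon => hw1 (Subgroup.mem_bot.mp (hcon ▸ Subgroup.mem_zpowers w))
      set π := QuotientGroup.mk' W with hπ
      have hcard : Nat.card (G ⧸ W) < n := lt_of_lt_of_le (card_quotient_lt hWbot) hle
      have hmaptop : Subgroup.map π Hs = ⊤ := by
        refine IH _ hcard (G ⧸ W) le_rfl (hG.to_quotient W) _ ?_
        have := congrArg (Subgroup.map π) hsup
        rwa [Subgroup.map_sup, Subgroup.map_commutator, map_mk'_top] at this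
      -- decompose arbitrary elements
      have hdec : ∀ g : G, ∃ h ∈ Hs, ∃ u : G, (∀ x : G, Commute u x) ∧ g = h * u := by
        intro g
        have : π g ∈ Subgroup.map π Hs := by rw [hmaptop]; exact Subgroup.mem_top _
        obtain ⟨h, hh, hπh⟩ := Subgroup.mem_map.mp this
        have humem : h⁻¹ * g ∈ W := by
          rw [← QuotientGroup.ker_mk' W]
          show h⁻¹ * g ∈ (QuotientGroup.mk' W).ker
          rw [MonoidHom.mem_ker, map_mul, map_inv, hπh, inv_mul_cancel]
        exact ⟨h, hh, h⁻¹ * g, zpowers_central hwcomm _ humem, by group⟩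
      have hDle : ⁅(⊤ : Subgroup G), (⊤ : Subgroup G)⁆ ≤ Hs := by
        rw [Subgroup.commutator_le]
        intro g₁ _ g₂ _
        obtain ⟨h₁, hh₁, u₁, hu₁, rfl⟩ := hdec g₁
        obtain ⟨h₂, hh₂, u₂, hu₂, rfl⟩ := hdec g₂
        rw [commutator_absorb_central h₁ u₁ h₂ u₂ hu₁ hu₂]
        show h₁ * h₂ * h₁⁻¹ * h₂⁻¹ ∈ Hs
        exact Hs.mul_mem (Hs.mul_mem (Hs.mul_mem hh₁ hh₂) (Hs.inv_mem hh₁)) (Hs.inv_mem hh₂)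
      rw [eq_top_iff, ← hsup]
      exact sup_le le_rfl hDle

end TopPP
section PowerfullyEmbedded

variable {p : ℕ} [hp : Fact p.Prime]

lemma pe_map {G : Type u} [Group G] {Q : Type u} [Group Q] (f : G →* Q)
    (hsurj : Function.Surjective f) {q : ℕ} {N : Subgroup G}
    (hpe : ⁅N, (⊤ : Subgroup G)⁆ ≤ PP q N) :
    ⁅Subgroup.map f N, (⊤ : Subgroup Q)⁆ ≤ PP q (Subgroup.map f N) := by
  have h := Subgroup.map_mono (f := f) hpe
  rwa [Subgroup.map_commutator, Subgroup.map_top_of_surjective _ hsurj, map_PP] at h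

lemma quotient_step {G : Type u} [Group G] {T : Subgroup G} [T.Normal] {a b : ℕ}
    {N : Subgroup G} (h : PP b (PP a N) ≤ T)
    (IHres : ⁅PP a (Subgroup.map (QuotientGroup.mk' T) N), (⊤ : Subgroup (G ⧸ T))⁆ ≤
      PP b (PP a (Subgroup.map (QuotientGroup.mk' T) N))) :
    ⁅PP a N, (⊤ : Subgroup G)⁆ ≤ T := by
  set π := QuotientGroup.mk' T with hπ
  have h1 : Subgroup.map π ⁅PP a N, (⊤ : Subgroup G)⁆ ≤
      Subgroup.map π (PP b (PP a N)) := by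
    rw [Subgroup.map_commutator, map_mk'_top]
    simp only [map_PP]
    exact IHres
  have h2 : Subgroup.map π (PP b (PP a N)) = ⊥ := by
    rw [Subgroup.map_eq_bot_iff, QuotientGroup.ker_mk']
    exact h
  rw [h2, le_bot_iff, Subgroup.map_eq_bot_iff, QuotientGroup.ker_mk'] at h1
  exact h1

/-- DDMS Lemma 2.2, odd case: if `N` is powerfully embedded then so is `Nᵖ`. -/
lemma O1odd (hodd : Odd p) :
    ∀ (n : ℕ) (G : Type u) [Group G] [Finite G], Nat.card G ≤ n → IsPGroup p G →
      ∀ N : Subgroup G, ⁅N, (⊤ : Subgroup G)⁆ ≤ PP p N →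
        ⁅PP p N, (⊤ : Subgroup G)⁆ ≤ PP p (PP p N) := by
  have htwo : 2 < p := by
    rcases Nat.lt_or_ge 2 p with h | h
    · exact h
    · exfalso
      interval_cases p
      · exact Nat.not_prime_zero hp.out
      · exact Nat.not_prime_one hp.out
      · rw [Nat.odd_iff] at hodd; omega
  intro n
  induction n using Nat.strong_induction_on with
  | _ n IH =>
    intro G _ _ hle hG N hpe
    have hNnorm : N.Normal := normal_of_comm_le (hpe.trans PP_le)
    have hMnorm : (PP p N).Normal := PP_normal hNnorm
    haveI := hMnorm
    have hDnorm : (PP p (PP p N)).Normal := PP_normal hMnorm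
    haveI := hDnorm
    by_cases hD : PP p (PP p N) = ⊥
    · by_cases hZ : ⁅PP p N, (⊤ : Subgroup G)⁆ = ⊥
      · rw [hZ]; exact bot_le
      haveI : Subgroup.Normal ⁅PP p N, (⊤ : Subgroup G)⁆ := Subgroup.commutator_normal _ _
      obtain ⟨w, hwZ, hwcomm, hw1, hwp⟩ :=
        exists_order_p_central hG ⁅PP p N, (⊤ : Subgroup G)⁆ hZ
      set W := Subgroup.zpowers w with hWdef
      haveI : W.Normal := normal_of_central (zpowers_central hwcomm)
      have hWbot : W ≠ ⊥ := fun hcon => hw1 (Subgroup.mem_bot.mp (hcon ▸ Subgroup.mem_zpowers w))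
      have hZW : ⁅PP p N, (⊤ : Subgroup G)⁆ ≤ W := by
        refine quotient_step (a := p) (b := p) (by rw [hD]; exact bot_le) ?_
        exact IH _ (lt_of_lt_of_le (card_quotient_lt hWbot) hle) (G ⧸ W) le_rfl
          (hG.to_quotient W) _ (pe_map _ (QuotientGroup.mk'_surjective W) hpe)
      have hgen : ∀ g : G, ∀ x ∈ N, ⁅x ^ p, g⁆ = 1 := by
        intro g x hxN
        have hc : ⁅x, g⁆ ∈ PP p N :=
          hpe (Subgroup.commutator_mem_commutator hxN (Subgroup.mem_top g))
        have hzZ : ⁅x, ⁅x, g⁆⁆ ∈ ⁅PP p N, (⊤ : Subgroup G)⁆ := by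
          have h1 : ⁅⁅x, g⁆, x⁆ ∈ ⁅PP p N, (⊤ : Subgroup G)⁆ :=
            Subgroup.commutator_mem_commutator hc (Subgroup.mem_top x)
          have h2 : ⁅x, ⁅x, g⁆⁆ = (⁅⁅x, g⁆, x⁆)⁻¹ := by rw [commutatorElement_inv]
          rw [h2]
          exact Subgroup.inv_mem _ h1
        have hzcomm : ∀ a : G, Commute ⁅x, ⁅x, g⁆⁆ a := zpowers_central hwcomm _ (hZW hzZ)
        have hform := comm_pow_formula x g _ rfl hzcomm p
        have hcp : ⁅x, g⁆ ^ p = 1 := by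
          have hmem : ⁅x, g⁆ ^ p ∈ PP p (PP p N) := pow_mem_PP hc
          rw [hD] at hmem
          exact Subgroup.mem_bot.mp hmem
        have hzp : ⁅x, ⁅x, g⁆⁆ ^ p = 1 := zpowers_pow_eq_one hwp (hZW hzZ)
        obtain ⟨t, ht⟩ := hp.out.dvd_choose_self two_ne_zero htwo
        rw [hform, hcp, mul_one, ht, pow_mul, hzp, one_pow]
      rw [Subgroup.commutator_le]
      intro m hm g _
      suffices hcom : Commute m g by
        rw [commutatorElement_eq_one_iff_commute.mpr hcom]
        exact (PP p (PP p N)).one_mem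
      refine Subgroup.closure_induction ?_ (Commute.one_left g)
        (fun a b _ _ ha hb => ha.mul_left hb) (fun a _ ha => ha.inv_left) hm
      rintro _ ⟨x, hxN, rfl⟩
      exact commutatorElement_eq_one_iff_commute.mp (hgen g x hxN)
    · refine quotient_step (a := p) (b := p) le_rfl ?_
      exact IH _ (lt_of_lt_of_le (card_quotient_lt hD) hle) _ le_rfl
        (hG.to_quotient _) _ (pe_map _ (QuotientGroup.mk'_surjective _) hpe)

/-- DDMS Lemma 2.2, `p = 2` case. -/
lemma O1two :
    ∀ (n : ℕ) (G : Type u) [Group G] [Finite G], Nat.card G ≤ n → IsPGroup 2 G →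
      ∀ N : Subgroup G, ⁅N, (⊤ : Subgroup G)⁆ ≤ PP 4 N →
        ⁅PP 2 N, (⊤ : Subgroup G)⁆ ≤ PP 4 (PP 2 N) := by
  haveI hfact2 : Fact (Nat.Prime 2) := ⟨Nat.prime_two⟩
  intro n
  induction n using Nat.strong_induction_on with
  | _ n IH =>
    intro G _ _ hle hG N hpe
    have hNnorm : N.Normal := normal_of_comm_le (hpe.trans PP_le)
    have hMnorm : (PP 2 N).Normal := PP_normal hNnorm
    haveI := hMnorm
    have hDnorm : (PP 4 (PP 2 N)).Normal := PP_normal hMnorm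
    haveI := hDnorm
    by_cases hD : PP 4 (PP 2 N) = ⊥
    · by_cases hZ : ⁅PP 2 N, (⊤ : Subgroup G)⁆ = ⊥
      · rw [hZ]; exact bot_le
      haveI : Subgroup.Normal ⁅PP 2 N, (⊤ : Subgroup G)⁆ := Subgroup.commutator_normal _ _
      obtain ⟨w, hwZ, hwcomm, hw1, hwp⟩ :=
        exists_order_p_central (p := 2) hG ⁅PP 2 N, (⊤ : Subgroup G)⁆ hZ
      set W := Subgroup.zpowers w with hWdef
      haveI : W.Normal := normal_of_central (zpowers_central hwcomm)
      have hWbot : W ≠ ⊥ := fun hcon => hw1 (Subgroup.mem_bot.mp (hcon ▸ Subgroup.mem_zpowers w))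
      have hZW : ⁅PP 2 N, (⊤ : Subgroup G)⁆ ≤ W := by
        refine quotient_step (a := 2) (b := 4) (by rw [hD]; exact bot_le) ?_
        exact IH _ (lt_of_lt_of_le (card_quotient_lt hWbot) hle) (G ⧸ W) le_rfl
          (hG.to_quotient W) _ (pe_map _ (QuotientGroup.mk'_surjective W) hpe)
      -- Step A: squares of elements of `PP 2 N` are central
      have hstepA : ∀ m ∈ PP 2 N, ∀ g : G, ⁅m ^ 2, g⁆ = 1 := by
        intro m hm g
        have hc : ⁅m, g⁆ ∈ ⁅PP 2 N, (⊤ : Subgroup G)⁆ :=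
          Subgroup.commutator_mem_commutator hm (Subgroup.mem_top g)
        have hcW : ⁅m, g⁆ ∈ W := hZW hc
        have hccomm : ∀ a : G, Commute ⁅m, g⁆ a := zpowers_central hwcomm _ hcW
        have hz1 : ⁅m, ⁅m, g⁆⁆ = 1 :=
          commutatorElement_eq_one_iff_commute.mpr ((hccomm m).symm)
        have hform := comm_pow_formula m g _ rfl
          (fun a => by rw [hz1]; exact Commute.one_left a) 2
        have hc2 : ⁅m, g⁆ ^ 2 = 1 := zpowers_pow_eq_one hwp hcW
        rw [hform, hz1, one_pow, one_mul, hc2]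
      -- Step B: all of PP 2 (PP 2 N) is central
      have hstepB : ∀ h ∈ PP 2 (PP 2 N), ∀ a : G, Commute h a := by
        intro h hh
        refine Subgroup.closure_induction ?_ (fun a => Commute.one_left a)
          (fun a b _ _ ha hb c => (ha c).mul_left (hb c))
          (fun a _ ha c => (ha c).inv_left) hh
        rintro _ ⟨m, hm, rfl⟩ a
        exact commutatorElement_eq_one_iff_commute.mp (hstepA m hm a)
      -- Step C: PP 4 N ≤ PP 2 (PP 2 N)
      have hstepC : PP 4 N ≤ PP 2 (PP 2 N) := by
        rw [PP, Subgroup.closure_le]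
        rintro _ ⟨y, hy, rfl⟩
        show y ^ 4 ∈ PP 2 (PP 2 N)
        have h4 : y ^ 4 = (y ^ 2) ^ 2 := by rw [← pow_mul]
        rw [h4]
        exact pow_mem_PP (pow_mem_PP hy)
      have hstepD : ∀ h ∈ PP 4 N, ∀ a : G, Commute h a := fun h hh => hstepB h (hstepC hh)
      -- Step E: PP 4 N has exponent 2
      have hstepE : ∀ h ∈ PP 4 N, h ^ 2 = 1 := by
        intro h hh
        refine Subgroup.closure_induction ?_ (by rw [one_pow]) ?_ ?_ hh
        · rintro _ ⟨y, hy, rfl⟩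
          have h8 : (y ^ 4) ^ 2 = (y ^ 2) ^ 4 := by rw [← pow_mul, ← pow_mul]
          rw [h8]
          have hmem : (y ^ 2) ^ 4 ∈ PP 4 (PP 2 N) := pow_mem_PP (pow_mem_PP hy)
          rw [hD] at hmem
          exact Subgroup.mem_bot.mp hmem
        · intro a b ha hb ha2 hb2
          have hcomm : Commute a b := hstepD a (by exact ha) b
          rw [hcomm.mul_pow, ha2, hb2, one_mul]
        · intro a _ ha2
          rw [inv_pow, ha2, inv_one]
      -- Step F: generators of PP 2 N are central
      have hgen : ∀ g : G, ∀ x ∈ N, ⁅x ^ 2, g⁆ = 1 := by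
        intro g x hxN
        have hc : ⁅x, g⁆ ∈ PP 4 N :=
          hpe (Subgroup.commutator_mem_commutator hxN (Subgroup.mem_top g))
        have hz1 : ⁅x, ⁅x, g⁆⁆ = 1 :=
          commutatorElement_eq_one_iff_commute.mpr ((hstepD _ hc x).symm)
        have hform := comm_pow_formula x g _ rfl
          (fun a => by rw [hz1]; exact Commute.one_left a) 2
        rw [hform, hz1, one_pow, one_mul, hstepE _ hc]
      rw [Subgroup.commutator_le]
      intro m hm g _
      suffices hcom : Commute m g by
        rw [commutatorElement_eq_one_iff_commute.mpr hcom]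
        exact (PP 4 (PP 2 N)).one_mem
      refine Subgroup.closure_induction ?_ (Commute.one_left g)
        (fun a b _ _ ha hb => ha.mul_left hb) (fun a _ ha => ha.inv_left) hm
      rintro _ ⟨x, hxN, rfl⟩
      exact commutatorElement_eq_one_iff_commute.mp (hgen g x hxN)
    · refine quotient_step (a := 2) (b := 4) le_rfl ?_
      exact IH _ (lt_of_lt_of_le (card_quotient_lt hD) hle) _ le_rfl
        (hG.to_quotient _) _ (pe_map _ (QuotientGroup.mk'_surjective _) hpe)

end PowerfullyEmbedded
section SubtypeBridge

variable {G : Type*} [Group G]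

lemma map_subtype_top (K : Subgroup G) : Subgroup.map K.subtype ⊤ = K := by
  rw [← MonoidHom.range_eq_map, Subgroup.range_subtype]

lemma map_subtype_PP (K : Subgroup G) (n : ℕ) :
    Subgroup.map K.subtype (PP n ⊤) = PP n K := by
  rw [map_PP, map_subtype_top]

lemma mem_PP_top_iff {K : Subgroup G} {n : ℕ} {a : ↥K} :
    a ∈ PP n (⊤ : Subgroup ↥K) ↔ (a : G) ∈ PP n K := by
  constructor
  · intro h
    have h1 := Subgroup.mem_map_of_mem K.subtype h
    rwa [map_subtype_PP] at h1
  · intro h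
    rw [← map_subtype_PP] at h
    obtain ⟨b, hb, hba⟩ := Subgroup.mem_map.mp h
    have hba' : b = a := K.subtype_injective hba
    exact hba' ▸ hb

lemma comm_top_le_PP_of (K : Subgroup G) (n : ℕ) (h : ⁅K, K⁆ ≤ PP n K) :
    ⁅(⊤ : Subgroup ↥K), (⊤ : Subgroup ↥K)⁆ ≤ PP n (⊤ : Subgroup ↥K) := by
  rw [← Subgroup.map_le_map_iff_of_injective (f := K.subtype) K.subtype_injective,
    Subgroup.map_commutator, map_subtype_PP, map_subtype_top]
  exact h

end SubtypeBridge

lemma hpow_map {G : Type u} [Group G] {Q : Type u} [Group Q] (f : G →* Q)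
    (hsurj : Function.Surjective f) {q : ℕ}
    (h : ⁅(⊤ : Subgroup G), (⊤ : Subgroup G)⁆ ≤ PP q ⊤) :
    ⁅(⊤ : Subgroup Q), (⊤ : Subgroup Q)⁆ ≤ PP q ⊤ := by
  have h1 := pe_map f hsurj h
  rwa [Subgroup.map_top_of_surjective _ hsurj] at h1

section MainFinite

variable {p : ℕ} [hp : Fact p.Prime]

/-- In a finite `p`-group generated by `x` together with commutators and `q`-th powers,
the subgroup `⟨x⟩ ⊔ [G,G]` is normal, and by a Frattini-type argument `G = ⟨x⟩`. -/
lemma cyclic_of_sup_eq_top {G : Type u} [Group G] [Finite G] (hG : IsPGroup p G) (x : G)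
    {q : ℕ} (hq : q ≠ 0) (hH2 : Subgroup.zpowers x ⊔ PP q (⊤ : Subgroup G) = ⊤)
    (hqp : PP q (⊤ : Subgroup G) ≤ PP p (⊤ : Subgroup G)) :
    Subgroup.zpowers x = ⊤ := by
  haveI hBnorm : (Subgroup.zpowers x ⊔ ⁅(⊤ : Subgroup G), (⊤ : Subgroup G)⁆).Normal := by
    constructor
    intro b hb gg
    have hmap : Subgroup.map (MulAut.conj gg).toMonoidHom
        (Subgroup.zpowers x ⊔ ⁅(⊤ : Subgroup G), (⊤ : Subgroup G)⁆) ≤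
        Subgroup.zpowers x ⊔ ⁅(⊤ : Subgroup G), (⊤ : Subgroup G)⁆ := by
      rw [Subgroup.map_sup, MonoidHom.map_zpowers, Subgroup.map_commutator,
        Subgroup.map_top_of_surjective _ (MulEquiv.surjective _)]
      refine sup_le ?_ le_sup_right
      rw [Subgroup.zpowers_le]
      have hconjx : (MulAut.conj gg).toMonoidHom x = ⁅gg, x⁆ * x := by
        simp only [MulEquiv.coe_toMonoidHom, MulAut.conj_apply, commutatorElement_def]
        group
      rw [hconjx]
      exact Subgroup.mul_mem _
        (Subgroup.mem_sup_right
          (Subgroup.commutator_mem_commutator (Subgroup.mem_top gg) (Subgroup.mem_top x)))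
        (Subgroup.mem_sup_left (Subgroup.mem_zpowers x))
    have h2 := hmap (Subgroup.mem_map_of_mem _ hb)
    simpa using h2
  have hPPQ : PP p (⊤ : Subgroup
      (G ⧸ (Subgroup.zpowers x ⊔ ⁅(⊤ : Subgroup G), (⊤ : Subgroup G)⁆))) = ⊤ := by
    set πB := QuotientGroup.mk' (Subgroup.zpowers x ⊔ ⁅(⊤ : Subgroup G), (⊤ : Subgroup G)⁆)
    have h1 : Subgroup.map πB (Subgroup.zpowers x ⊔ PP q ⊤) = ⊤ := by
      rw [hH2, map_mk'_top]
    rw [Subgroup.map_sup, MonoidHom.map_zpowers, map_PP, map_mk'_top] at h1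
    have hx1 : πB x = 1 :=
      (QuotientGroup.eq_one_iff x).mpr (Subgroup.mem_sup_left (Subgroup.mem_zpowers x))
    rw [hx1, Subgroup.zpowers_one_eq_bot, bot_sup_eq] at h1
    -- h1 : PP q ⊤ = ⊤ in the quotient; upgrade to PP p ⊤ = ⊤
    have h3 := Subgroup.map_mono (f := πB) hqp
    rw [map_PP, map_PP, map_mk'_top] at h3
    rw [eq_top_iff]
    exact le_trans (le_of_eq h1.symm) h3
  have hsub : Subsingleton
      (G ⧸ (Subgroup.zpowers x ⊔ ⁅(⊤ : Subgroup G), (⊤ : Subgroup G)⁆)) :=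
    subsingleton_of_PP_eq_top (Nat.card _) _ le_rfl (hG.to_quotient _) hPPQ
  have hBtop : Subgroup.zpowers x ⊔ ⁅(⊤ : Subgroup G), (⊤ : Subgroup G)⁆ = ⊤ := by
    rw [eq_top_iff]
    intro gg _
    exact (QuotientGroup.eq_one_iff gg).mp (Subsingleton.elim _ _)
  exact eq_top_of_sup_commutator (Nat.card G) G le_rfl hG _ hBtop

/-- In a finite powerful `p`-group (`p` odd), every element of `⟨Gᵖ⟩` is a `p`-th power. -/
lemma Codd (hodd : Odd p) :
    ∀ (n : ℕ) (G : Type u) [Group G] [Finite G], Nat.card G ≤ n → IsPGroup p G →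
      ⁅(⊤ : Subgroup G), (⊤ : Subgroup G)⁆ ≤ PP p ⊤ →
      ∀ g ∈ PP p (⊤ : Subgroup G), ∃ x : G, x ^ p = g := by
  have htwo : 2 < p := by
    rcases Nat.lt_or_ge 2 p with h | h
    · exact h
    · exfalso
      interval_cases p
      · exact Nat.not_prime_zero hp.out
      · exact Nat.not_prime_one hp.out
      · rw [Nat.odd_iff] at hodd; omega
  intro n
  induction n using Nat.strong_induction_on with
  | _ n IH =>
    intro G _ _ hle hG hpow g hg
    rcases subsingleton_or_nontrivial G with hss | hnt
    · exact ⟨1, Subsingleton.elim _ _⟩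
    have peK : ⁅PP p (⊤ : Subgroup G), (⊤ : Subgroup G)⁆ ≤ PP p (PP p ⊤) :=
      O1odd hodd (Nat.card G) G le_rfl hG ⊤ hpow
    have hKne : PP p (⊤ : Subgroup G) ≠ ⊤ := by
      intro hEq
      exact (not_subsingleton G) (subsingleton_of_PP_eq_top (Nat.card G) G le_rfl hG hEq)
    have hKcard : Nat.card ↥(PP p (⊤ : Subgroup G)) < Nat.card G := card_subgroup_lt hKne
    have hKK : ⁅PP p (⊤ : Subgroup G), PP p (⊤ : Subgroup G)⁆ ≤ PP p (PP p ⊤) :=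
      (Subgroup.commutator_mono le_rfl le_top).trans peK
    haveI hKnorm : (PP p (⊤ : Subgroup G)).Normal := PP_normal inferInstance
    haveI hP3norm : (PP p (PP p (⊤ : Subgroup G))).Normal := PP_normal hKnorm
    by_cases hP3 : PP p (PP p (⊤ : Subgroup G)) = ⊥
    · -- base case
      have hKcentral : ∀ k ∈ PP p (⊤ : Subgroup G), ∀ a : G, Commute k a := by
        intro k hk a
        have h1 : ⁅k, a⁆ ∈ (⊥ : Subgroup G) :=
          hP3 ▸ peK (Subgroup.commutator_mem_commutator hk (Subgroup.mem_top a))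
        exact commutatorElement_eq_one_iff_commute.mp (Subgroup.mem_bot.mp h1)
      have hKexp : ∀ k ∈ PP p (⊤ : Subgroup G), k ^ p = 1 := by
        intro k hk
        have h1 : k ^ p ∈ PP p (PP p (⊤ : Subgroup G)) := pow_mem_PP hk
        rw [hP3] at h1
        exact Subgroup.mem_bot.mp h1
      refine Subgroup.closure_induction (p := fun a _ => ∃ x : G, x ^ p = a)
        ?_ ⟨1, one_pow p⟩ ?_ ?_ hg
      · rintro _ ⟨x, -, rfl⟩
        exact ⟨x, rfl⟩
      · rintro a b ha hb ⟨c₁, rfl⟩ ⟨c₂, rfl⟩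
        have hwK : ⁅c₂, c₁⁆ ∈ PP p (⊤ : Subgroup G) :=
          hpow (Subgroup.commutator_mem_commutator (Subgroup.mem_top c₂) (Subgroup.mem_top c₁))
        have hwc : ∀ t : G, Commute ⁅c₂, c₁⁆ t := hKcentral _ hwK
        have hrel : c₂ * c₁ = c₁ * c₂ * ⁅c₂, c₁⁆ := by
          have h1 : c₂ * c₁ = ⁅c₂, c₁⁆ * (c₁ * c₂) := by
            simp only [commutatorElement_def]; group
          rw [h1, (hwc (c₁ * c₂)).eq, mul_assoc]
        have hform := mul_pow_formula c₁ c₂ ⁅c₂, c₁⁆ hwc hrel p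
        obtain ⟨t, ht⟩ := hp.out.dvd_choose_self two_ne_zero htwo
        refine ⟨c₁ * c₂, ?_⟩
        rw [hform, ht, pow_mul, hKexp _ hwK, one_pow, mul_one]
      · rintro a ha ⟨c, rfl⟩
        exact ⟨c⁻¹, by rw [inv_pow]⟩
    · -- recursive case
      set π := QuotientGroup.mk' (PP p (PP p (⊤ : Subgroup G))) with hπdef
      have hcardQ : Nat.card (G ⧸ PP p (PP p (⊤ : Subgroup G))) < n :=
        lt_of_lt_of_le (card_quotient_lt hP3) hle
      have hmemQ : π g ∈ PP p (⊤ : Subgroup (G ⧸ PP p (PP p (⊤ : Subgroup G)))) := by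
        have h1 := Subgroup.mem_map_of_mem π hg
        rwa [map_PP, map_mk'_top] at h1
      obtain ⟨xb, hxb⟩ := IH _ hcardQ _ le_rfl (hG.to_quotient _)
        (hpow_map π (QuotientGroup.mk'_surjective _) hpow) (π g) hmemQ
      obtain ⟨x, rfl⟩ := QuotientGroup.mk'_surjective _ xb
      have hmemP3 : (x ^ p)⁻¹ * g ∈ PP p (PP p (⊤ : Subgroup G)) := by
        rw [← QuotientGroup.ker_mk' (PP p (PP p (⊤ : Subgroup G)))]
        show (x ^ p)⁻¹ * g ∈ (QuotientGroup.mk' (PP p (PP p (⊤ : Subgroup G)))).ker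
        rw [MonoidHom.mem_ker, map_mul, map_inv, map_pow]
        rw [hπdef] at hxb
        rw [hxb, inv_mul_cancel]
      have hin : ((x ^ p)⁻¹ * g) ∈ PP p (⊤ : Subgroup G) := PP_le hmemP3
      obtain ⟨y, hy⟩ : ∃ y : ↥(PP p (⊤ : Subgroup G)), (y : G) ^ p = (x ^ p)⁻¹ * g := by
        have hKpow : ⁅(⊤ : Subgroup ↥(PP p (⊤ : Subgroup G))), ⊤⁆ ≤ PP p ⊤ :=
          comm_top_le_PP_of _ p hKK
        have hmem' : (⟨(x ^ p)⁻¹ * g, hin⟩ : ↥(PP p (⊤ : Subgroup G))) ∈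
            PP p (⊤ : Subgroup ↥(PP p (⊤ : Subgroup G))) := mem_PP_top_iff.mpr hmemP3
        obtain ⟨y, hy⟩ := IH _ (lt_of_lt_of_le hKcard hle) _ le_rfl
          (hG.to_subgroup _) hKpow _ hmem'
        refine ⟨y, ?_⟩
        rw [← SubgroupClass.coe_pow, hy]
      have hgeq : g = x ^ p * (y : G) ^ p := by rw [hy]; group
      by_cases hH2 : Subgroup.zpowers x ⊔ PP p (⊤ : Subgroup G) = ⊤
      · have hcyc : Subgroup.zpowers x = ⊤ :=
          cyclic_of_sup_eq_top hG x hp.out.ne_zero hH2 le_rfl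
        have hyx : Commute x (y : G) := by
          have hmem : (y : G) ∈ Subgroup.zpowers x := by
            rw [hcyc]; exact Subgroup.mem_top _
          obtain ⟨j, hj⟩ := Subgroup.mem_zpowers_iff.mp hmem
          rw [← hj]
          exact (Commute.refl x).zpow_right j
        exact ⟨x * (y : G), by rw [hyx.mul_pow, ← hgeq]⟩
      · -- H₂ := ⟨x⟩ ⊔ K is a proper powerful subgroup
        have hxH : x ∈ Subgroup.zpowers x ⊔ PP p (⊤ : Subgroup G) :=
          Subgroup.mem_sup_left (Subgroup.mem_zpowers x)
        have hyH : (y : G) ∈ Subgroup.zpowers x ⊔ PP p (⊤ : Subgroup G) :=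
          Subgroup.mem_sup_right y.2
        have hdecomp : ∀ u ∈ Subgroup.zpowers x ⊔ PP p (⊤ : Subgroup G),
            ∃ (jj : ℤ) (k : G), k ∈ PP p (⊤ : Subgroup G) ∧ (x ^ jj) * k = u := by
          intro u hu
          have hset : u ∈ ((Subgroup.zpowers x : Set G) * (PP p (⊤ : Subgroup G) : Set G)) := by
            rw [← Subgroup.mul_normal]
            exact hu
          obtain ⟨u₁, hu₁, u₂, hu₂, heq⟩ := Set.mem_mul.mp hset
          obtain ⟨j, hj⟩ := Subgroup.mem_zpowers_iff.mp hu₁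
          exact ⟨j, u₂, hu₂, by rw [hj, heq]⟩
        have hcommH2 : ⁅Subgroup.zpowers x ⊔ PP p (⊤ : Subgroup G),
            Subgroup.zpowers x ⊔ PP p (⊤ : Subgroup G)⁆ ≤ PP p (PP p (⊤ : Subgroup G)) := by
          rw [Subgroup.commutator_le]
          intro a ha b hb
          obtain ⟨j₁, k₁, hk₁, rfl⟩ := hdecomp a ha
          obtain ⟨j₂, k₂, hk₂, rfl⟩ := hdecomp b hb
          have hcen : ∀ k ∈ PP p (⊤ : Subgroup G),
              ∀ t : G ⧸ PP p (PP p (⊤ : Subgroup G)), Commute (π k) t := by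
            intro k hk t
            obtain ⟨s, rfl⟩ := QuotientGroup.mk'_surjective _ t
            apply commutatorElement_eq_one_iff_commute.mp
            rw [← map_commutatorElement]
            exact (QuotientGroup.eq_one_iff _).mpr
              (peK (Subgroup.commutator_mem_commutator hk (Subgroup.mem_top s)))
          have h1 : π ⁅x ^ j₁ * k₁, x ^ j₂ * k₂⁆ = 1 := by
            rw [map_commutatorElement]
            apply commutatorElement_eq_one_iff_commute.mpr
            rw [map_mul, map_mul, map_zpow, map_zpow]
            have hc1 : Commute (π x ^ j₁) (π x ^ j₂ * π k₂) :=
              Commute.mul_right ((Commute.refl (π x)).zpow_zpow j₁ j₂) ((hcen k₂ hk₂ _).symm)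
            have hc2 : Commute (π k₁) (π x ^ j₂ * π k₂) := hcen k₁ hk₁ _
            exact Commute.mul_left hc1 hc2
          exact (QuotientGroup.eq_one_iff _).mp h1
        have hH2pow : ⁅Subgroup.zpowers x ⊔ PP p (⊤ : Subgroup G),
            Subgroup.zpowers x ⊔ PP p (⊤ : Subgroup G)⁆ ≤
            PP p (Subgroup.zpowers x ⊔ PP p (⊤ : Subgroup G)) :=
          hcommH2.trans (PP_mono le_sup_right)
        have hH2card : Nat.card ↥(Subgroup.zpowers x ⊔ PP p (⊤ : Subgroup G)) < n :=
          lt_of_lt_of_le (card_subgroup_lt hH2) hle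
        have hH2top : ⁅(⊤ : Subgroup ↥(Subgroup.zpowers x ⊔ PP p (⊤ : Subgroup G))), ⊤⁆ ≤
            PP p ⊤ := comm_top_le_PP_of _ p hH2pow
        have hemem : (⟨x, hxH⟩ : ↥(Subgroup.zpowers x ⊔ PP p (⊤ : Subgroup G))) ^ p *
            ⟨(y : G), hyH⟩ ^ p ∈
            PP p (⊤ : Subgroup ↥(Subgroup.zpowers x ⊔ PP p (⊤ : Subgroup G))) := by
          rw [mem_PP_top_iff]
          push_cast
          exact Subgroup.mul_mem _ (pow_mem_PP hxH) (pow_mem_PP hyH)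
        obtain ⟨c, hc⟩ := IH _ hH2card _ le_rfl (hG.to_subgroup _) hH2top _ hemem
        refine ⟨(c : G), ?_⟩
        rw [← SubgroupClass.coe_pow, hc]
        push_cast
        rw [← hgeq]

end MainFinite
section MainFinite2

/-- In a finite powerful 2-group (`[G,G] ≤ ⟨G⁴⟩`), every element of `⟨G²⟩` is a square. -/
lemma C2 :
    ∀ (n : ℕ) (G : Type u) [Group G] [Finite G], Nat.card G ≤ n → IsPGroup 2 G →
      ⁅(⊤ : Subgroup G), (⊤ : Subgroup G)⁆ ≤ PP 4 ⊤ →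
      ∀ g ∈ PP 2 (⊤ : Subgroup G), ∃ x : G, x ^ 2 = g := by
  haveI hp2 : Fact (Nat.Prime 2) := ⟨Nat.prime_two⟩
  intro n
  induction n using Nat.strong_induction_on with
  | _ n IH =>
    intro G _ _ hle hG hpow g hg
    rcases subsingleton_or_nontrivial G with hss | hnt
    · exact ⟨1, Subsingleton.elim _ _⟩
    have peK : ⁅PP 2 (⊤ : Subgroup G), (⊤ : Subgroup G)⁆ ≤ PP 4 (PP 2 ⊤) :=
      O1two (Nat.card G) G le_rfl hG ⊤ hpow
    have hKne : PP 2 (⊤ : Subgroup G) ≠ ⊤ := by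
      intro hEq
      exact (not_subsingleton G)
        (subsingleton_of_PP_eq_top (p := 2) (Nat.card G) G le_rfl hG hEq)
    have hKcard : Nat.card ↥(PP 2 (⊤ : Subgroup G)) < Nat.card G := card_subgroup_lt hKne
    have hKK : ⁅PP 2 (⊤ : Subgroup G), PP 2 (⊤ : Subgroup G)⁆ ≤ PP 4 (PP 2 ⊤) :=
      (Subgroup.commutator_mono le_rfl le_top).trans peK
    haveI hKnorm : (PP 2 (⊤ : Subgroup G)).Normal := PP_normal inferInstance
    haveI hP3norm : (PP 2 (PP 2 (⊤ : Subgroup G))).Normal := PP_normal hKnorm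
    haveI hP4norm : (PP 4 (PP 2 (⊤ : Subgroup G))).Normal := PP_normal hKnorm
    by_cases hP3 : PP 2 (PP 2 (⊤ : Subgroup G)) = ⊥
    · -- base case: K central of exponent 2
      have hKcentral : ∀ k ∈ PP 2 (⊤ : Subgroup G), ∀ a : G, Commute k a := by
        intro k hk a
        have h1 : ⁅k, a⁆ ∈ (⊥ : Subgroup G) := by
          rw [← hP3]
          exact (PP_four_le_PP_two _)
            (peK (Subgroup.commutator_mem_commutator hk (Subgroup.mem_top a)))
        exact commutatorElement_eq_one_iff_commute.mp (Subgroup.mem_bot.mp h1)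
      have hKexp : ∀ k ∈ PP 2 (⊤ : Subgroup G), k ^ 2 = 1 := by
        intro k hk
        have h1 : k ^ 2 ∈ PP 2 (PP 2 (⊤ : Subgroup G)) := pow_mem_PP hk
        rw [hP3] at h1
        exact Subgroup.mem_bot.mp h1
      have hPP4 : PP 4 (⊤ : Subgroup G) ≤ PP 2 (⊤ : Subgroup G) := by
        rw [PP, Subgroup.closure_le]
        rintro _ ⟨a, -, rfl⟩
        show a ^ 4 ∈ PP 2 (⊤ : Subgroup G)
        have h4 : a ^ 4 = (a ^ 2) ^ 2 := by rw [← pow_mul]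
        rw [h4]
        exact pow_mem_PP (Subgroup.mem_top _)
      have hsq : ∀ u ∈ PP 4 (⊤ : Subgroup G),
          ∃ v, v ∈ PP 2 (⊤ : Subgroup G) ∧ v ^ 2 = u := by
        intro u hu
        refine Subgroup.closure_induction
          (p := fun a _ => ∃ v, v ∈ PP 2 (⊤ : Subgroup G) ∧ v ^ 2 = a)
          ?_ ⟨1, Subgroup.one_mem _, one_pow 2⟩ ?_ ?_ hu
        · rintro _ ⟨a, -, rfl⟩
          refine ⟨a ^ 2, pow_mem_PP (Subgroup.mem_top a), ?_⟩
          rw [← pow_mul]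
        · rintro a b ha hb ⟨v₁, hv₁, rfl⟩ ⟨v₂, hv₂, rfl⟩
          refine ⟨v₁ * v₂, Subgroup.mul_mem _ hv₁ hv₂, ?_⟩
          rw [(hKcentral v₁ hv₁ v₂).mul_pow]
        · rintro a ha ⟨v, hv, rfl⟩
          exact ⟨v⁻¹, Subgroup.inv_mem _ hv, by rw [inv_pow]⟩
      refine Subgroup.closure_induction (p := fun a _ => ∃ x : G, x ^ 2 = a)
        ?_ ⟨1, one_pow 2⟩ ?_ ?_ hg
      · rintro _ ⟨x, -, rfl⟩
        exact ⟨x, rfl⟩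
      · rintro a b ha hb ⟨c₁, rfl⟩ ⟨c₂, rfl⟩
        have hwPP4 : ⁅c₂, c₁⁆ ∈ PP 4 (⊤ : Subgroup G) :=
          hpow (Subgroup.commutator_mem_commutator (Subgroup.mem_top c₂) (Subgroup.mem_top c₁))
        have hwc : ∀ t : G, Commute ⁅c₂, c₁⁆ t := hKcentral _ (hPP4 hwPP4)
        have hrel : c₂ * c₁ = c₁ * c₂ * ⁅c₂, c₁⁆ := by
          have h1 : c₂ * c₁ = ⁅c₂, c₁⁆ * (c₁ * c₂) := by
            simp only [commutatorElement_def]; group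
          rw [h1, (hwc (c₁ * c₂)).eq, mul_assoc]
        have hform := mul_pow_formula c₁ c₂ ⁅c₂, c₁⁆ hwc hrel 2
        obtain ⟨v, hvK, hv⟩ := hsq _ (Subgroup.inv_mem _ hwPP4)
        refine ⟨c₁ * c₂ * v, ?_⟩
        have hcomm : Commute (c₁ * c₂) v := ((hKcentral v hvK (c₁ * c₂)).symm)
        rw [hcomm.mul_pow, hform, hv]
        have h22 : (2 : ℕ).choose 2 = 1 := Nat.choose_self 2
        rw [h22, pow_one, mul_inv_cancel_right]
      · rintro a ha ⟨c, rfl⟩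
        exact ⟨c⁻¹, by rw [inv_pow]⟩
    · -- recursive case
      set π := QuotientGroup.mk' (PP 2 (PP 2 (⊤ : Subgroup G))) with hπdef
      have hcardQ : Nat.card (G ⧸ PP 2 (PP 2 (⊤ : Subgroup G))) < n :=
        lt_of_lt_of_le (card_quotient_lt hP3) hle
      have hmemQ : π g ∈ PP 2 (⊤ : Subgroup (G ⧸ PP 2 (PP 2 (⊤ : Subgroup G)))) := by
        have h1 := Subgroup.mem_map_of_mem π hg
        rwa [map_PP, map_mk'_top] at h1
      obtain ⟨xb, hxb⟩ := IH _ hcardQ _ le_rfl (hG.to_quotient _)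
        (hpow_map π (QuotientGroup.mk'_surjective _) hpow) (π g) hmemQ
      obtain ⟨x, rfl⟩ := QuotientGroup.mk'_surjective _ xb
      have hmemP3 : (x ^ 2)⁻¹ * g ∈ PP 2 (PP 2 (⊤ : Subgroup G)) := by
        rw [← QuotientGroup.ker_mk' (PP 2 (PP 2 (⊤ : Subgroup G)))]
        show (x ^ 2)⁻¹ * g ∈ (QuotientGroup.mk' (PP 2 (PP 2 (⊤ : Subgroup G)))).ker
        rw [MonoidHom.mem_ker, map_mul, map_inv, map_pow]
        rw [hπdef] at hxb
        rw [hxb, inv_mul_cancel]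
      have hin : ((x ^ 2)⁻¹ * g) ∈ PP 2 (⊤ : Subgroup G) := PP_le hmemP3
      obtain ⟨y, hy⟩ : ∃ y : ↥(PP 2 (⊤ : Subgroup G)), (y : G) ^ 2 = (x ^ 2)⁻¹ * g := by
        have hKpow : ⁅(⊤ : Subgroup ↥(PP 2 (⊤ : Subgroup G))), ⊤⁆ ≤ PP 4 ⊤ :=
          comm_top_le_PP_of _ 4 hKK
        have hmem' : (⟨(x ^ 2)⁻¹ * g, hin⟩ : ↥(PP 2 (⊤ : Subgroup G))) ∈
            PP 2 (⊤ : Subgroup ↥(PP 2 (⊤ : Subgroup G))) := mem_PP_top_iff.mpr hmemP3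
        obtain ⟨y, hy⟩ := IH _ (lt_of_lt_of_le hKcard hle) _ le_rfl
          (hG.to_subgroup _) hKpow _ hmem'
        refine ⟨y, ?_⟩
        rw [← SubgroupClass.coe_pow, hy]
      have hgeq : g = x ^ 2 * (y : G) ^ 2 := by rw [hy]; group
      by_cases hH2 : Subgroup.zpowers x ⊔ PP 2 (⊤ : Subgroup G) = ⊤
      · have hcyc : Subgroup.zpowers x = ⊤ :=
          cyclic_of_sup_eq_top (p := 2) hG x two_ne_zero hH2 le_rfl
        have hyx : Commute x (y : G) := by
          have hmem : (y : G) ∈ Subgroup.zpowers x := by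
            rw [hcyc]; exact Subgroup.mem_top _
          obtain ⟨j, hj⟩ := Subgroup.mem_zpowers_iff.mp hmem
          rw [← hj]
          exact (Commute.refl x).zpow_right j
        exact ⟨x * (y : G), by rw [hyx.mul_pow, ← hgeq]⟩
      · have hxH : x ∈ Subgroup.zpowers x ⊔ PP 2 (⊤ : Subgroup G) :=
          Subgroup.mem_sup_left (Subgroup.mem_zpowers x)
        have hyH : (y : G) ∈ Subgroup.zpowers x ⊔ PP 2 (⊤ : Subgroup G) :=
          Subgroup.mem_sup_right y.2
        have hdecomp : ∀ u ∈ Subgroup.zpowers x ⊔ PP 2 (⊤ : Subgroup G),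
            ∃ (jj : ℤ) (k : G), k ∈ PP 2 (⊤ : Subgroup G) ∧ (x ^ jj) * k = u := by
          intro u hu
          have hset : u ∈ ((Subgroup.zpowers x : Set G) * (PP 2 (⊤ : Subgroup G) : Set G)) := by
            rw [← Subgroup.mul_normal]
            exact hu
          obtain ⟨u₁, hu₁, u₂, hu₂, heq⟩ := Set.mem_mul.mp hset
          obtain ⟨j, hj⟩ := Subgroup.mem_zpowers_iff.mp hu₁
          exact ⟨j, u₂, hu₂, by rw [hj, heq]⟩
        set σ := QuotientGroup.mk' (PP 4 (PP 2 (⊤ : Subgroup G))) with hσdef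
        have hcommH2 : ⁅Subgroup.zpowers x ⊔ PP 2 (⊤ : Subgroup G),
            Subgroup.zpowers x ⊔ PP 2 (⊤ : Subgroup G)⁆ ≤ PP 4 (PP 2 (⊤ : Subgroup G)) := by
          rw [Subgroup.commutator_le]
          intro a ha b hb
          obtain ⟨j₁, k₁, hk₁, rfl⟩ := hdecomp a ha
          obtain ⟨j₂, k₂, hk₂, rfl⟩ := hdecomp b hb
          have hcen : ∀ k ∈ PP 2 (⊤ : Subgroup G),
              ∀ t : G ⧸ PP 4 (PP 2 (⊤ : Subgroup G)), Commute (σ k) t := by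
            intro k hk t
            obtain ⟨s, rfl⟩ := QuotientGroup.mk'_surjective _ t
            apply commutatorElement_eq_one_iff_commute.mp
            rw [← map_commutatorElement]
            exact (QuotientGroup.eq_one_iff _).mpr
              (peK (Subgroup.commutator_mem_commutator hk (Subgroup.mem_top s)))
          have h1 : σ ⁅x ^ j₁ * k₁, x ^ j₂ * k₂⁆ = 1 := by
            rw [map_commutatorElement]
            apply commutatorElement_eq_one_iff_commute.mpr
            rw [map_mul, map_mul, map_zpow, map_zpow]
            have hc1 : Commute (σ x ^ j₁) (σ x ^ j₂ * σ k₂) :=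
              Commute.mul_right ((Commute.refl (σ x)).zpow_zpow j₁ j₂) ((hcen k₂ hk₂ _).symm)
            have hc2 : Commute (σ k₁) (σ x ^ j₂ * σ k₂) := hcen k₁ hk₁ _
            exact Commute.mul_left hc1 hc2
          exact (QuotientGroup.eq_one_iff _).mp h1
        have hH2pow : ⁅Subgroup.zpowers x ⊔ PP 2 (⊤ : Subgroup G),
            Subgroup.zpowers x ⊔ PP 2 (⊤ : Subgroup G)⁆ ≤
            PP 4 (Subgroup.zpowers x ⊔ PP 2 (⊤ : Subgroup G)) :=
          hcommH2.trans (PP_mono le_sup_right)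
        have hH2card : Nat.card ↥(Subgroup.zpowers x ⊔ PP 2 (⊤ : Subgroup G)) < n :=
          lt_of_lt_of_le (card_subgroup_lt hH2) hle
        have hH2top : ⁅(⊤ : Subgroup ↥(Subgroup.zpowers x ⊔ PP 2 (⊤ : Subgroup G))), ⊤⁆ ≤
            PP 4 ⊤ := comm_top_le_PP_of _ 4 hH2pow
        have hemem : (⟨x, hxH⟩ : ↥(Subgroup.zpowers x ⊔ PP 2 (⊤ : Subgroup G))) ^ 2 *
            ⟨(y : G), hyH⟩ ^ 2 ∈
            PP 2 (⊤ : Subgroup ↥(Subgroup.zpowers x ⊔ PP 2 (⊤ : Subgroup G))) := by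
          rw [mem_PP_top_iff]
          push_cast
          exact Subgroup.mul_mem _ (pow_mem_PP hxH) (pow_mem_PP hyH)
        obtain ⟨c, hc⟩ := IH _ hH2card _ le_rfl (hG.to_subgroup _) hH2top _ hemem
        refine ⟨(c : G), ?_⟩
        rw [← SubgroupClass.coe_pow, hc]
        push_cast
        rw [← hgeq]

end MainFinite2
/-- Abstract (non-topological) lower `p`-series. -/
def La (p : ℕ) (G : Type*) [Group G] : ℕ → Subgroup G
  | 0 => ⊤
  | (i + 1) => PP p (La p G i) ⊔ ⁅La p G i, ⊤⁆

/-- DDMS Theorem 2.7 for finite powerful `p`-groups: the lower `p`-series consists exactly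
of the sets of `pⁱ`-th powers. -/
lemma finite_La {p : ℕ} [hp : Fact p.Prime] (G : Type u) [Group G] [Finite G]
    (hG : IsPGroup p G)
    (hpow : (Odd p ∧ ⁅(⊤ : Subgroup G), (⊤ : Subgroup G)⁆ ≤ PP p ⊤) ∨
      (p = 2 ∧ ⁅(⊤ : Subgroup G), (⊤ : Subgroup G)⁆ ≤ PP 4 ⊤)) :
    ∀ i : ℕ, ((La p G i : Subgroup G) : Set G) = Set.range (fun x : G => x ^ p ^ i) := by
  have hzero : ((La p G 0 : Subgroup G) : Set G) = Set.range (fun x : G => x ^ p ^ 0) := by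
    show ((⊤ : Subgroup G) : Set G) = Set.range fun x : G => x ^ p ^ 0
    ext a
    simp only [Subgroup.coe_top, Set.mem_univ, true_iff, Set.mem_range, pow_zero, pow_one]
    exact ⟨a, rfl⟩
  rcases hpow with ⟨hodd, hpow⟩ | ⟨hp2, hpow⟩
  · have main : ∀ i, (((La p G i : Subgroup G) : Set G) =
        Set.range (fun x : G => x ^ p ^ i)) ∧
        ⁅La p G i, (⊤ : Subgroup G)⁆ ≤ PP p (La p G i) := by
      intro i
      induction i with
      | zero => exact ⟨hzero, hpow⟩
      | succ i ih =>
        obtain ⟨hset, hpe⟩ := ih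
        have hstep : La p G (i + 1) = PP p (La p G i) := by
          show PP p (La p G i) ⊔ ⁅La p G i, ⊤⁆ = PP p (La p G i)
          exact sup_eq_left.mpr hpe
        have hpe' : ⁅La p G (i + 1), (⊤ : Subgroup G)⁆ ≤ PP p (La p G (i + 1)) := by
          rw [hstep]
          exact O1odd hodd (Nat.card G) G le_rfl hG _ hpe
        refine ⟨?_, hpe'⟩
        rw [hstep]
        ext a
        constructor
        · intro hmem
          have haL : a ∈ La p G i := PP_le hmem
          have hLpow : ⁅(⊤ : Subgroup ↥(La p G i)), ⊤⁆ ≤ PP p ⊤ :=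
            comm_top_le_PP_of _ p ((Subgroup.commutator_mono le_rfl le_top).trans hpe)
          obtain ⟨y, hy⟩ := Codd hodd (Nat.card ↥(La p G i)) ↥(La p G i) le_rfl
            (hG.to_subgroup _) hLpow ⟨a, haL⟩ (mem_PP_top_iff.mpr hmem)
          have hyL : (y : G) ∈ ((La p G i : Subgroup G) : Set G) := y.2
          rw [hset] at hyL
          obtain ⟨x, hx⟩ := hyL
          refine ⟨x, ?_⟩
          show x ^ p ^ (i + 1) = a
          have hcoe : (y : G) ^ p = a := by
            rw [← SubgroupClass.coe_pow, hy]
          rw [pow_succ, pow_mul]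
          have hx' := hx
          simp only [] at hx'
          rw [hx']
          exact hcoe
        · rintro ⟨x, rfl⟩
          show x ^ p ^ (i + 1) ∈ PP p (La p G i)
          have hx : x ^ p ^ i ∈ La p G i := by
            have hh : x ^ p ^ i ∈ ((La p G i : Subgroup G) : Set G) := by
              rw [hset]; exact ⟨x, rfl⟩
            exact hh
          rw [pow_succ, pow_mul]
          exact pow_mem_PP hx
    exact fun i => (main i).1
  · subst hp2
    have main : ∀ i, (((La 2 G i : Subgroup G) : Set G) =
        Set.range (fun x : G => x ^ 2 ^ i)) ∧
        ⁅La 2 G i, (⊤ : Subgroup G)⁆ ≤ PP 4 (La 2 G i) := by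
      intro i
      induction i with
      | zero => exact ⟨hzero, hpow⟩
      | succ i ih =>
        obtain ⟨hset, hpe⟩ := ih
        have hstep : La 2 G (i + 1) = PP 2 (La 2 G i) := by
          show PP 2 (La 2 G i) ⊔ ⁅La 2 G i, ⊤⁆ = PP 2 (La 2 G i)
          exact sup_eq_left.mpr (hpe.trans (PP_four_le_PP_two _))
        have hpe' : ⁅La 2 G (i + 1), (⊤ : Subgroup G)⁆ ≤ PP 4 (La 2 G (i + 1)) := by
          rw [hstep]
          exact O1two (Nat.card G) G le_rfl hG _ hpe
        refine ⟨?_, hpe'⟩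
        rw [hstep]
        ext a
        constructor
        · intro hmem
          have haL : a ∈ La 2 G i := PP_le hmem
          have hLpow : ⁅(⊤ : Subgroup ↥(La 2 G i)), ⊤⁆ ≤ PP 4 ⊤ :=
            comm_top_le_PP_of _ 4 ((Subgroup.commutator_mono le_rfl le_top).trans hpe)
          obtain ⟨y, hy⟩ := C2 (Nat.card ↥(La 2 G i)) ↥(La 2 G i) le_rfl
            (hG.to_subgroup _) hLpow ⟨a, haL⟩ (mem_PP_top_iff.mpr hmem)
          have hyL : (y : G) ∈ ((La 2 G i : Subgroup G) : Set G) := y.2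
          rw [hset] at hyL
          obtain ⟨x, hx⟩ := hyL
          refine ⟨x, ?_⟩
          show x ^ 2 ^ (i + 1) = a
          have hcoe : (y : G) ^ 2 = a := by
            rw [← SubgroupClass.coe_pow, hy]
          rw [pow_succ, pow_mul]
          have hx' := hx
          simp only [] at hx'
          rw [hx']
          exact hcoe
        · rintro ⟨x, rfl⟩
          show x ^ 2 ^ (i + 1) ∈ PP 2 (La 2 G i)
          have hx : x ^ 2 ^ i ∈ La 2 G i := by
            have hh : x ^ 2 ^ i ∈ ((La 2 G i : Subgroup G) : Set G) := by
              rw [hset]; exact ⟨x, rfl⟩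
            exact hh
          rw [pow_succ, pow_mul]
          exact pow_mem_PP hx
    exact fun i => (main i).1

section DiscreteBridge

lemma topologicalClosure_eq_of_discrete {G : Type*} [Group G] [TopologicalSpace G]
    [IsTopologicalGroup G] [DiscreteTopology G] (S : Subgroup G) :
    S.topologicalClosure = S := by
  refine le_antisymm ?_ (Subgroup.le_topologicalClosure S)
  intro a ha
  have h1 : a ∈ _root_.closure (S : Set G) := ha
  rwa [IsClosed.closure_eq (isClosed_discrete _)] at h1

lemma lowerPSeries_eq_La_of_discrete {p : ℕ} {G : Type*} [Group G] [TopologicalSpace G]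
    [IsTopologicalGroup G] [DiscreteTopology G] (i : ℕ) :
    lowerPSeries p G i = La p G i := by
  induction i with
  | zero => rfl
  | succ i ih =>
    show pPowComm p (lowerPSeries p G i) = La p G (i + 1)
    rw [ih]
    show (PP p (La p G i) ⊔ ⁅La p G i, ⊤⁆).topologicalClosure = La p G (i + 1)
    rw [topologicalClosure_eq_of_discrete]
    rfl

lemma map_topClosure_of_discrete {G Q : Type*} [Group G] [TopologicalSpace G]
    [IsTopologicalGroup G] [Group Q] [TopologicalSpace Q] [IsTopologicalGroup Q]
    [DiscreteTopology Q] (f : G →* Q) (hf : Continuous f) (S : Subgroup G) :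
    Subgroup.map f S.topologicalClosure = Subgroup.map f S := by
  refine le_antisymm ?_ (Subgroup.map_mono (Subgroup.le_topologicalClosure S))
  intro q hq
  obtain ⟨h, hh, rfl⟩ := Subgroup.mem_map.mp hq
  have h1 : f h ∈ f '' (_root_.closure (S : Set G)) := ⟨h, hh, rfl⟩
  have h2 := image_closure_subset_closure_image hf h1
  rw [IsClosed.closure_eq (isClosed_discrete _)] at h2
  obtain ⟨s, hs, hseq⟩ := h2
  exact Subgroup.mem_map.mpr ⟨s, hs, hseq⟩

lemma map_lowerPSeries {p : ℕ} {G Q : Type*} [Group G] [TopologicalSpace G]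
    [IsTopologicalGroup G] [Group Q] [TopologicalSpace Q] [IsTopologicalGroup Q]
    [DiscreteTopology Q] (f : G →* Q) (hf : Continuous f) (hsurj : Function.Surjective f)
    (i : ℕ) : Subgroup.map f (lowerPSeries p G i) = lowerPSeries p Q i := by
  induction i with
  | zero => exact Subgroup.map_top_of_surjective f hsurj
  | succ i ih =>
    show Subgroup.map f (pPowComm p (lowerPSeries p G i)) = pPowComm p (lowerPSeries p Q i)
    have h1 : pPowComm p (lowerPSeries p G i) =
        (PP p (lowerPSeries p G i) ⊔ ⁅lowerPSeries p G i, ⊤⁆).topologicalClosure := rfl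
    rw [h1, map_topClosure_of_discrete f hf, Subgroup.map_sup, map_PP,
      Subgroup.map_commutator, Subgroup.map_top_of_surjective f hsurj, ih]
    show _ = (PP p (lowerPSeries p Q i) ⊔ ⁅lowerPSeries p Q i, ⊤⁆).topologicalClosure
    rw [topologicalClosure_eq_of_discrete]

lemma discrete_quotient_of_isOpen {G : Type*} [Group G] [TopologicalSpace G]
    [IsTopologicalGroup G] (N : Subgroup G) [N.Normal] (hN : IsOpen (N : Set G)) :
    DiscreteTopology (G ⧸ N) := by
  rw [discreteTopology_iff_isOpen_singleton_one]
  have hpre : ((QuotientGroup.mk : G → G ⧸ N) ⁻¹' ({1} : Set (G ⧸ N)) : Set G) = N := by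
    ext h
    simp only [Set.mem_preimage, Set.mem_singleton_iff]
    exact ⟨fun hh => (QuotientGroup.eq_one_iff h).mp hh,
      fun hh => (QuotientGroup.eq_one_iff h).mpr hh⟩
  rw [← (QuotientGroup.isQuotientMap_mk N).isOpen_preimage, hpre]
  exact hN

end DiscreteBridge
theorem stmt7 (p : ℕ) [hp : Fact p.Prime] (H : Type*) [Group H] [TopologicalSpace H]
    [IsTopologicalGroup H] (hProP : IsProP p H) (hPow : IsPowerful p H) (hFG : TopFG H) :
    ∀ i : ℕ, (lowerPSeries p H i : Set H) = Set.range (fun x : H => x ^ (p ^ i)) := by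
  obtain ⟨hcomp, ht2, htd, hidx⟩ := hProP
  haveI := hcomp
  haveI := ht2
  haveI := htd
  have heasy : ∀ j : ℕ, Set.range (fun x : H => x ^ p ^ j) ⊆ (lowerPSeries p H j : Set H) := by
    intro j
    induction j with
    | zero =>
      rintro _ ⟨x, rfl⟩
      exact Subgroup.mem_top _
    | succ j ihj =>
      rintro _ ⟨x, rfl⟩
      have h1 : x ^ p ^ j ∈ lowerPSeries p H j := ihj ⟨x, rfl⟩
      have h2 : x ^ p ^ (j + 1) ∈ PP p (lowerPSeries p H j) := by
        rw [pow_succ, pow_mul]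
        exact pow_mem_PP h1
      show x ^ p ^ (j + 1) ∈ pPowComm p (lowerPSeries p H j)
      exact Subgroup.le_topologicalClosure _ (Subgroup.mem_sup_left h2)
  intro i
  refine Set.Subset.antisymm ?_ (heasy i)
  intro g hgmem
  by_contra hg
  have hSclosed : IsClosed (Set.range (fun x : H => x ^ p ^ i)) := by
    have hcomp2 : IsCompact (Set.range (fun x : H => x ^ p ^ i)) := by
      rw [← Set.image_univ]
      exact isCompact_univ.image (continuous_pow (p ^ i))
    exact hcomp2.isClosed
  have hVclosed : IsClosed {h : H | g * h⁻¹ ∈ Set.range (fun x : H => x ^ p ^ i)} := by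
    have hcont : Continuous (fun h : H => g * h⁻¹) := continuous_const.mul continuous_inv
    exact hSclosed.preimage hcont
  have h1V : (1 : H) ∈ ({h : H | g * h⁻¹ ∈ Set.range (fun x : H => x ^ p ^ i)})ᶜ := by
    simp only [Set.mem_compl_iff, Set.mem_setOf_eq, inv_one, mul_one]
    exact hg
  obtain ⟨W, hWclopen, hW1, hWsub⟩ :=
    compact_exists_isClopen_in_isOpen hVclosed.isOpen_compl h1V
  obtain ⟨Nop, hNsub⟩ :=
    IsTopologicalGroup.exist_openNormalSubgroup_sub_clopen_nhds_of_one hWclopen hW1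
  haveI hNnorm : Nop.toOpenSubgroup.toSubgroup.Normal := Nop.isNormal'
  have hNopen : IsOpen ((Nop.toOpenSubgroup.toSubgroup : Subgroup H) : Set H) :=
    Nop.toOpenSubgroup.isOpen
  haveI := discrete_quotient_of_isOpen Nop.toOpenSubgroup.toSubgroup hNopen
  haveI : Finite (H ⧸ Nop.toOpenSubgroup.toSubgroup) :=
    Nop.toOpenSubgroup.toSubgroup.quotient_finite_of_isOpen hNopen
  haveI hQp : IsPGroup p (H ⧸ Nop.toOpenSubgroup.toSubgroup) := by
    obtain ⟨m, hm⟩ := hidx Nop.toOpenSubgroup.toSubgroup hNnorm hNopen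
    exact IsPGroup.iff_card.mpr ⟨m, hm⟩
  set π := QuotientGroup.mk' Nop.toOpenSubgroup.toSubgroup with hπdef
  have hπc : Continuous ⇑π := by
    rw [hπdef, QuotientGroup.coe_mk']
    exact QuotientGroup.continuous_mk
  have hπs : Function.Surjective ⇑π :=
    QuotientGroup.mk'_surjective Nop.toOpenSubgroup.toSubgroup
  have htransfer : ∀ q : ℕ, (∀ x y : H, ⁅x, y⁆ ∈
      (Subgroup.closure ((fun g0 : H => g0 ^ q) '' Set.univ)).topologicalClosure) →
      ⁅(⊤ : Subgroup (H ⧸ Nop.toOpenSubgroup.toSubgroup)),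
        (⊤ : Subgroup (H ⧸ Nop.toOpenSubgroup.toSubgroup))⁆ ≤ PP q ⊤ := by
    intro q hq
    rw [Subgroup.commutator_le]
    intro a _ b _
    obtain ⟨a₀, rfl⟩ := hπs a
    obtain ⟨b₀, rfl⟩ := hπs b
    have h1 : ⁅a₀, b₀⁆ ∈ (PP q (⊤ : Subgroup H)).topologicalClosure := by
      have h2 := hq a₀ b₀
      have h3 : PP q (⊤ : Subgroup H) =
          Subgroup.closure ((fun g0 : H => g0 ^ q) '' Set.univ) := by
        rw [PP, Subgroup.coe_top]
      rw [h3]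
      exact h2
    have h4 : π ⁅a₀, b₀⁆ ∈ Subgroup.map π ((PP q (⊤ : Subgroup H)).topologicalClosure) :=
      Subgroup.mem_map_of_mem _ h1
    rw [map_topClosure_of_discrete π hπc, map_PP, Subgroup.map_top_of_surjective _ hπs] at h4
    rw [← map_commutatorElement]
    exact h4
  have hpowQ : (Odd p ∧ ⁅(⊤ : Subgroup (H ⧸ Nop.toOpenSubgroup.toSubgroup)),
        (⊤ : Subgroup (H ⧸ Nop.toOpenSubgroup.toSubgroup))⁆ ≤ PP p ⊤) ∨
      (p = 2 ∧ ⁅(⊤ : Subgroup (H ⧸ Nop.toOpenSubgroup.toSubgroup)),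
        (⊤ : Subgroup (H ⧸ Nop.toOpenSubgroup.toSubgroup))⁆ ≤ PP 4 ⊤) := by
    rcases hPow with ⟨hodd, hcomm⟩ | ⟨h2, hcomm⟩
    · exact Or.inl ⟨hodd, htransfer p hcomm⟩
    · exact Or.inr ⟨h2, htransfer 4 hcomm⟩
  have hfin := finite_La (H ⧸ Nop.toOpenSubgroup.toSubgroup) hQp hpowQ i
  have hmapL : Subgroup.map π (lowerPSeries p H i) =
      La p (H ⧸ Nop.toOpenSubgroup.toSubgroup) i := by
    rw [map_lowerPSeries π hπc hπs, lowerPSeries_eq_La_of_discrete]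
  have hgQ : π g ∈ La p (H ⧸ Nop.toOpenSubgroup.toSubgroup) i := by
    rw [← hmapL]
    exact Subgroup.mem_map_of_mem _ hgmem
  have hgQ' : π g ∈ Set.range (fun x : H ⧸ Nop.toOpenSubgroup.toSubgroup => x ^ p ^ i) := by
    rw [← hfin]
    exact hgQ
  obtain ⟨xb, hxb⟩ := hgQ'
  obtain ⟨x, rfl⟩ := hπs xb
  have humem : (x ^ p ^ i)⁻¹ * g ∈ Nop.toOpenSubgroup.toSubgroup := by
    rw [← QuotientGroup.ker_mk' Nop.toOpenSubgroup.toSubgroup]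
    show (x ^ p ^ i)⁻¹ * g ∈ π.ker
    rw [MonoidHom.mem_ker, map_mul, map_inv, map_pow]
    simp only [] at hxb
    rw [hxb, inv_mul_cancel]
  have hcontr := hWsub (hNsub humem)
  apply hcontr
  show g * ((x ^ p ^ i)⁻¹ * g)⁻¹ ∈ Set.range (fun x : H => x ^ p ^ i)
  refine ⟨x, ?_⟩
  show x ^ p ^ i = g * ((x ^ p ^ i)⁻¹ * g)⁻¹
  group
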